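/- arXiv:math/0409534 — 5 statements merged into one kernel-verified Lean document; each statement's English description precedes it below -/
import Mathlib

section
/- Let P(z) = Σ_{i=1}^k h_{α_i}(z)^d with d ≥ 2 and all α_i ∈ ℂ^n isotropic (Σ_l (α_i)_l² = 0). Define the k×k matrix Ψ_P over ℂ[z] with (i,j) entry ⟨α_i, α_j⟩·h_{α_j}(z)^{d-2}. Then for every m ≥ 1, Tr(Hes(P)^m) = (d(d-1))^m · Tr(Ψ_P^m). -/
open MvPolynomial

/-- The linear polynomial `h_α(z) = ∑ α_l z_l`. -/
noncomputable def hlin {n : ℕ} (α : Fin n → ℂ) : MvPolynomial (Fin n) ℂ :=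
  ∑ l, C (α l) * X l

/-- The Hessian matrix of a polynomial. -/
noncomputable def hess {n : ℕ} (P : MvPolynomial (Fin n) ℂ) :
    Matrix (Fin n) (Fin n) (MvPolynomial (Fin n) ℂ) :=
  Matrix.of fun i j => pderiv i (pderiv j P)

lemma pderiv_hlin {n : ℕ} (α : Fin n → ℂ) (j : Fin n) :
    pderiv j (hlin α) = C (α j) := by
  simp [hlin, pderiv_X, Pi.single_apply, Finset.sum_ite_eq']

lemma trace_mul_pow_comm {R : Type*} [CommRing R] {a b : Type*} [Fintype a] [Fintype b]
    [DecidableEq a] [DecidableEq b]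
    (A : Matrix a b R) (B : Matrix b a R) (m : ℕ) (hm : 1 ≤ m) :
    Matrix.trace ((A * B) ^ m) = Matrix.trace ((B * A) ^ m) := by
  obtain ⟨p, rfl⟩ := Nat.exists_eq_add_of_le hm
  have h : (A * B) ^ (1 + p) = A * ((B * A) ^ p * B) := by
    induction p with
    | zero => simp [Matrix.mul_assoc]
    | succ q ih =>
      have : 1 + (q + 1) = (1 + q) + 1 := by ring
      rw [this, pow_succ, ih (by omega), pow_succ]
      simp only [Matrix.mul_assoc]
  have h2 : (B * A) ^ (1 + p) = ((B * A) ^ p * B) * A := by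
    rw [add_comm, pow_succ, Matrix.mul_assoc]
  rw [h, h2, Matrix.trace_mul_comm]

theorem trace_hessian_pow_eq {n k d : ℕ} (hd : 2 ≤ d) (α : Fin k → (Fin n → ℂ))
    (hiso : ∀ i : Fin k, ∑ l, (α i l) ^ 2 = 0) (m : ℕ) (hm : 1 ≤ m) :
    Matrix.trace ((hess (∑ i, (hlin (α i)) ^ d)) ^ m) =
      ((d * (d - 1) : ℕ) : MvPolynomial (Fin n) ℂ) ^ m *
        Matrix.trace
          ((Matrix.of fun i j : Fin k =>
            C (∑ l, α i l * α j l) * (hlin (α j)) ^ (d - 2)) ^ m) := by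
  set c : MvPolynomial (Fin n) ℂ := ((d * (d - 1) : ℕ) : MvPolynomial (Fin n) ℂ) with hc
  set A : Matrix (Fin n) (Fin k) (MvPolynomial (Fin n) ℂ) :=
    Matrix.of fun i j => C (α j i) * (hlin (α j)) ^ (d - 2) with hA
  set B : Matrix (Fin k) (Fin n) (MvPolynomial (Fin n) ℂ) :=
    Matrix.of fun j l => C (α j l) with hB
  have hHess : hess (∑ i, (hlin (α i)) ^ d) = c • (A * B) := by
    refine Matrix.ext fun i l => ?_
    simp only [hess, Matrix.of_apply, map_sum]
    simp only [Matrix.smul_apply, Matrix.mul_apply, hA, hB, Matrix.of_apply, smul_eq_mul]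
    rw [Finset.mul_sum]
    refine Finset.sum_congr rfl fun j _ => ?_
    have hder : pderiv i ((d : ℕ) : MvPolynomial (Fin n) ℂ) = 0 := by
      rw [← map_natCast (C : ℂ →+* MvPolynomial (Fin n) ℂ)]; exact pderiv_C
    rw [pderiv_pow, pderiv_hlin]
    simp only [smul_eq_mul, pderiv_mul, pderiv_pow, pderiv_hlin, pderiv_C, hder,
      mul_zero, zero_mul, add_zero, map_mul, Nat.sub_sub, hc]
    push_cast [Nat.cast_sub (by omega : 1 ≤ d)]
    ring
  have hBA : B * A = Matrix.of fun i j : Fin k =>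
      C (∑ l, α i l * α j l) * (hlin (α j)) ^ (d - 2) := by
    refine Matrix.ext fun i j => ?_
    simp [Matrix.mul_apply, hA, hB, Finset.sum_mul, map_sum]
    ring_nf
    exact Finset.sum_congr rfl fun x _ => by ring
  rw [hHess, smul_pow, Matrix.trace_smul, ← hBA, trace_mul_pow_comm A B m hm, smul_eq_mul]
end

section
/- For any polynomials g, f ∈ ℂ[z_1,...,z_n] and any integer l ≥ 1, Δ^l(g·f) = Σ_{k_1+k_2+k_3 = l, k_i ≥ 0} 2^{k_2}·(l!/(k_1!k_2!k_3!))·Σ_{i_1,...,i_{k_2}=1}^n (∂^{k_2} Δ^{k_1} g / ∂z_{i_1}···∂z_{i_{k_2}})·(∂^{k_2} Δ^{k_3} f / ∂z_{i_1}···∂z_{i_{k_2}}). -/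
open MvPolynomial

/-- The Laplace operator on polynomials in `n` variables. -/
noncomputable def lap {n : ℕ} (P : MvPolynomial (Fin n) ℂ) : MvPolynomial (Fin n) ℂ :=
  ∑ i, pderiv i (pderiv i P)

/-- The iterated partial derivative `∂^k/∂z_{v 0} ⋯ ∂z_{v (k-1)}`. -/
noncomputable def pderivTuple {n k : ℕ} (v : Fin k → Fin n)
    (P : MvPolynomial (Fin n) ℂ) : MvPolynomial (Fin n) ℂ :=
  (List.ofFn v).foldr (fun i Q => pderiv i Q) P

section Aux

variable {n : ℕ}

private lemma pderiv_comm' (i j : Fin n) (P : MvPolynomial (Fin n) ℂ) :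
    pderiv i (pderiv j P) = pderiv j (pderiv i P) := by
  induction P using MvPolynomial.induction_on with
  | C a => simp [pderiv_C]
  | add p q hp hq => simp [map_add, hp, hq]
  | mul_X p s hp =>
      have h1 : pderiv i (pderiv j (X s) : MvPolynomial (Fin n) ℂ) = 0 := by
        rcases eq_or_ne j s with rfl | h
        · simp [pderiv_X_self]
        · simp [pderiv_X_of_ne h.symm]
      have h2 : pderiv j (pderiv i (X s) : MvPolynomial (Fin n) ℂ) = 0 := by
        rcases eq_or_ne i s with rfl | h
        · simp [pderiv_X_self]
        · simp [pderiv_X_of_ne h.symm]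
      simp only [pderiv_mul, map_add, pderiv_mul, h1, h2, hp]
      ring

private lemma lap_sum {α : Type*} (s : Finset α) (F : α → MvPolynomial (Fin n) ℂ) :
    lap (∑ x ∈ s, F x) = ∑ x ∈ s, lap (F x) := by
  simp only [lap, map_sum]; rw [Finset.sum_comm]

private lemma lap_natCast_mul (m : ℕ) (P : MvPolynomial (Fin n) ℂ) :
    lap ((m : MvPolynomial (Fin n) ℂ) * P) = (m : MvPolynomial (Fin n) ℂ) * lap P := by
  rw [show ((m : MvPolynomial (Fin n) ℂ)) = C (m : ℂ) from (map_natCast C m).symm]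
  simp [lap, pderiv_C_mul, Finset.mul_sum]

private lemma lap_mul (p q : MvPolynomial (Fin n) ℂ) :
    lap (p * q) = lap p * q + 2 * ∑ i, pderiv i p * pderiv i q + p * lap q := by
  simp only [lap, pderiv_mul, map_add, Finset.sum_add_distrib, Finset.sum_mul, Finset.mul_sum,
    two_mul]
  ring

private lemma pderivTuple_cons {k : ℕ} (i : Fin n) (v : Fin k → Fin n)
    (P : MvPolynomial (Fin n) ℂ) :
    pderivTuple (Fin.cons i v) P = pderiv i (pderivTuple v P) := by
  simp [pderivTuple, List.ofFn_succ, Fin.cons_succ]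

private lemma pderiv_pderivTuple {k : ℕ} (j : Fin n) (v : Fin k → Fin n)
    (P : MvPolynomial (Fin n) ℂ) :
    pderiv j (pderivTuple v P) = pderivTuple v (pderiv j P) := by
  unfold pderivTuple
  induction List.ofFn v with
  | nil => rfl
  | cons a L ih => simp only [List.foldr_cons]; rw [pderiv_comm', ih]

private lemma pderivTuple_sum {k : ℕ} {α : Type*} (v : Fin k → Fin n) (s : Finset α)
    (F : α → MvPolynomial (Fin n) ℂ) :
    pderivTuple v (∑ x ∈ s, F x) = ∑ x ∈ s, pderivTuple v (F x) := by
  unfold pderivTuple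
  induction List.ofFn v with
  | nil => rfl
  | cons a L ih => simp only [List.foldr_cons, ih, map_sum]

private lemma lap_pderivTuple {k : ℕ} (v : Fin k → Fin n) (P : MvPolynomial (Fin n) ℂ) :
    lap (pderivTuple v P) = pderivTuple v (lap P) := by
  simp only [lap, pderiv_pderivTuple, pderivTuple_sum]

private lemma sum_fin_cons {M : Type*} [AddCommMonoid M] (k : ℕ)
    (F : (Fin (k + 1) → Fin n) → M) :
    ∑ w : Fin (k + 1) → Fin n, F w = ∑ i : Fin n, ∑ v : Fin k → Fin n, F (Fin.cons i v) := by
  rw [← Fintype.sum_equiv (Fin.consEquiv fun _ => Fin n) (fun p => F (Fin.cons p.1 p.2))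
      F (fun x => rfl), Fintype.sum_prod_type]

/-- The building block of the expansion. -/
private noncomputable def lapT (g f : MvPolynomial (Fin n) ℂ) (a b c : ℕ) :
    MvPolynomial (Fin n) ℂ :=
  ∑ v : Fin b → Fin n, pderivTuple v (lap^[a] g) * pderivTuple v (lap^[c] f)

private lemma lap_lapT (g f : MvPolynomial (Fin n) ℂ) (a b c : ℕ) :
    lap (lapT g f a b c) =
      lapT g f (a + 1) b c + 2 * lapT g f a (b + 1) c + lapT g f a b (c + 1) := by
  unfold lapT
  rw [lap_sum]
  have key : ∀ v : Fin b → Fin n,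
      lap (pderivTuple v (lap^[a] g) * pderivTuple v (lap^[c] f)) =
        pderivTuple v (lap^[a + 1] g) * pderivTuple v (lap^[c] f) +
          2 * ∑ i, pderivTuple (Fin.cons i v) (lap^[a] g) *
              pderivTuple (Fin.cons i v) (lap^[c] f) +
          pderivTuple v (lap^[a] g) * pderivTuple v (lap^[c + 1] f) := by
    intro v
    rw [lap_mul, lap_pderivTuple, lap_pderivTuple, ← Function.iterate_succ_apply' lap a g,
      ← Function.iterate_succ_apply' lap c f]
    simp only [pderivTuple_cons]
  rw [Finset.sum_congr rfl (fun v _ => key v), Finset.sum_add_distrib, Finset.sum_add_distrib]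
  congr 1
  rw [← Finset.mul_sum]
  congr 1
  rw [sum_fin_cons b (fun w => pderivTuple w (lap^[a] g) * pderivTuple w (lap^[c] f)),
    Finset.sum_comm]

private def coe3 (l a b : ℕ) : ℕ := 2 ^ b * Nat.choose l a * Nat.choose (l - a) b

private lemma coe3_rec (l a b : ℕ) :
    coe3 (l + 1) a b =
      (if a = 0 then 0 else coe3 l (a - 1) b) +
        (if b = 0 then 0 else 2 * coe3 l a (b - 1)) + coe3 l a b := by
  match a, b with
  | 0, 0 => simp [coe3]
  | 0, b + 1 =>
    rw [if_pos rfl, if_neg (Nat.succ_ne_zero b)]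
    simp only [coe3, Nat.add_sub_cancel, Nat.sub_zero, Nat.choose_zero_right]
    rw [Nat.choose_succ_succ l b]
    ring
  | a + 1, 0 =>
    rw [if_neg (Nat.succ_ne_zero a), if_pos rfl]
    simp only [coe3, Nat.add_sub_cancel, Nat.choose_zero_right, pow_zero]
    rw [Nat.choose_succ_succ l a]
    ring
  | a + 1, b + 1 =>
    have e1 : Nat.choose (l + 1) (a + 1) = l.choose a + l.choose (a + 1) :=
      Nat.choose_succ_succ _ _
    simp only [Nat.succ_ne_zero, if_false, Nat.add_sub_cancel, coe3, Nat.succ_sub_succ, e1,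
      Nat.sub_zero]
    rcases lt_or_ge a l with h | h
    · have h1 : l - a = (l - (a + 1)) + 1 := by omega
      have e2 : (l - a).choose (b + 1) =
          (l - (a + 1)).choose b + (l - (a + 1)).choose (b + 1) := by
        rw [h1]; exact Nat.choose_succ_succ _ _
      rw [e2]; ring
    · have h1 : Nat.choose l (a + 1) = 0 := Nat.choose_eq_zero_of_lt (by omega)
      have h2 : l - a = 0 := by omega
      rw [h1, h2]
      simp

private lemma coe3_eq_factorial (l a b : ℕ) (h : a + b ≤ l) :
    2 ^ b * (Nat.factorial l /
      (Nat.factorial a * Nat.factorial b * Nat.factorial (l - a - b))) = coe3 l a b := by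
  have h1 : l.choose a * a.factorial * (l - a).factorial = l.factorial :=
    Nat.choose_mul_factorial_mul_factorial (by omega)
  have h2 : (l - a).choose b * b.factorial * (l - a - b).factorial = (l - a).factorial :=
    Nat.choose_mul_factorial_mul_factorial (by omega)
  have key : l.factorial =
      (l.choose a * (l - a).choose b) * (a.factorial * b.factorial * (l - a - b).factorial) := by
    rw [← h1, ← h2]; ring
  have hpos : 0 < a.factorial * b.factorial * (l - a - b).factorial := by positivity
  rw [Nat.div_eq_of_eq_mul_left hpos key, coe3]
  ring

private lemma main_expansion (g f : MvPolynomial (Fin n) ℂ) (l : ℕ) :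
    lap^[l] (g * f) =
      ∑ a ∈ Finset.range (l + 1), ∑ b ∈ Finset.range (l + 1 - a),
        (coe3 l a b : MvPolynomial (Fin n) ℂ) * lapT g f a b (l - a - b) := by
  induction l with
  | zero =>
    simp [coe3, lapT, pderivTuple]
  | succ l ih =>
    rw [Function.iterate_succ_apply', ih, lap_sum]
    simp only [lap_sum, lap_natCast_mul, lap_lapT]
    simp only [mul_add, Finset.sum_add_distrib]
    have expand : ∀ a b : ℕ,
        ((coe3 (l + 1) a b : ℕ) : MvPolynomial (Fin n) ℂ) * lapT g f a b (l + 1 - a - b) =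
          (((if a = 0 then 0 else coe3 l (a - 1) b) : ℕ) : MvPolynomial (Fin n) ℂ) *
              lapT g f a b (l + 1 - a - b) +
            (((if b = 0 then 0 else 2 * coe3 l a (b - 1)) : ℕ) : MvPolynomial (Fin n) ℂ) *
              lapT g f a b (l + 1 - a - b) +
            ((coe3 l a b : ℕ) : MvPolynomial (Fin n) ℂ) * lapT g f a b (l + 1 - a - b) := by
      intro a b
      rw [coe3_rec l a b]
      push_cast
      ring
    rw [Finset.sum_congr rfl (fun a (_ : a ∈ Finset.range (l + 1 + 1)) =>
      Finset.sum_congr rfl (fun b (_ : b ∈ Finset.range (l + 1 + 1 - a)) => expand a b))]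
    simp only [Finset.sum_add_distrib]
    refine congrArg₂ (· + ·) ?_ ?_
    · refine congrArg₂ (· + ·) ?_ ?_
      -- D1 = E1
      · symm
        rw [Finset.sum_range_succ']
        simp only [eq_self_iff_true, if_true, Nat.cast_zero, zero_mul, Finset.sum_const_zero,
          add_zero, Nat.succ_ne_zero, if_false, Nat.add_sub_cancel, Nat.succ_sub_succ,
          Nat.sub_zero]
      -- D2 = E2
      · symm
        rw [Finset.sum_range_succ]
        have htop : ∑ b ∈ Finset.range (l + 1 + 1 - (l + 1)),
            (((if b = 0 then 0 else 2 * coe3 l (l + 1) (b - 1)) : ℕ) :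
                MvPolynomial (Fin n) ℂ) *
              lapT g f (l + 1) b (l + 1 - (l + 1) - b) = 0 := by
          simp
        rw [htop, add_zero]
        refine Finset.sum_congr rfl (fun a ha => ?_)
        have ha' : a ≤ l := by
          have := Finset.mem_range.mp ha; omega
        have hr : l + 1 + 1 - a = (l + 1 - a) + 1 := by omega
        rw [hr, Finset.sum_range_succ']
        simp only [eq_self_iff_true, if_true, Nat.cast_zero, zero_mul, add_zero,
          Nat.succ_ne_zero, if_false, Nat.add_sub_cancel, Nat.sub_zero]
        refine Finset.sum_congr rfl (fun b hb => ?_)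
        have hb' : b ≤ l - a := by
          have := Finset.mem_range.mp hb; omega
        have h3 : l + 1 - a - (b + 1) = l - a - b := by omega
        rw [h3]
        push_cast
        ring
    -- D3 = E3
    · symm
      rw [Finset.sum_range_succ]
      have htop : ∑ b ∈ Finset.range (l + 1 + 1 - (l + 1)),
          ((coe3 l (l + 1) b : ℕ) : MvPolynomial (Fin n) ℂ) *
            lapT g f (l + 1) b (l + 1 - (l + 1) - b) = 0 := by
        have h0 : coe3 l (l + 1) 0 = 0 := by
          simp [coe3, Nat.choose_eq_zero_of_lt (Nat.lt_succ_self l)]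
        simp [h0]
      rw [htop, add_zero]
      refine Finset.sum_congr rfl (fun a ha => ?_)
      have ha' : a ≤ l := by
        have := Finset.mem_range.mp ha; omega
      have hr : l + 1 + 1 - a = (l + 1 - a) + 1 := by omega
      rw [hr, Finset.sum_range_succ]
      have htop2 : ((coe3 l a (l + 1 - a) : ℕ) : MvPolynomial (Fin n) ℂ) *
          lapT g f a (l + 1 - a) (l + 1 - a - (l + 1 - a)) = 0 := by
        have h0 : coe3 l a (l + 1 - a) = 0 := by
          have hz : (l - a).choose (l + 1 - a) = 0 := Nat.choose_eq_zero_of_lt (by omega)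
          simp [coe3, hz]
        simp [h0]
      rw [htop2, add_zero]
      refine Finset.sum_congr rfl (fun b hb => ?_)
      have hb' : b ≤ l - a := by
        have := Finset.mem_range.mp hb; omega
      have h3 : l + 1 - a - b = (l - a - b) + 1 := by omega
      rw [h3]

end Aux

theorem lap_pow_mul_expansion {n : ℕ} (g f : MvPolynomial (Fin n) ℂ) (l : ℕ) (hl : 1 ≤ l) :
    lap^[l] (g * f) =
      ∑ k₁ ∈ Finset.range (l + 1), ∑ k₂ ∈ Finset.range (l + 1 - k₁),
        ((2 ^ k₂ * (Nat.factorial l /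
            (Nat.factorial k₁ * Nat.factorial k₂ * Nat.factorial (l - k₁ - k₂))) : ℕ) :
              MvPolynomial (Fin n) ℂ) *
          ∑ v : Fin k₂ → Fin n,
            pderivTuple v (lap^[k₁] g) * pderivTuple v (lap^[l - k₁ - k₂] f) := by
  rw [main_expansion g f l]
  refine Finset.sum_congr rfl (fun a ha => Finset.sum_congr rfl (fun b hb => ?_))
  have ha' : a ≤ l := by have := Finset.mem_range.mp ha; omega
  have hb' : b ≤ l - a := by have := Finset.mem_range.mp hb; omega
  rw [coe3_eq_factorial l a b (by omega)]
  rfl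
end

section
/- Let P be a homogeneous polynomial of degree d ≥ 1 in ℂ[z_1,...,z_n]. Then for any integers k > l ≥ 0, the polynomial Δ^l(P^k) lies in the ideal of ℂ[z_1,...,z_n] generated by the partial derivatives ∂P/∂z_1, ..., ∂P/∂z_n. -/
open MvPolynomial

namespace LapAux

variable {n : ℕ}

/-- Iterated partial derivatives along a list of directions. -/
noncomputable def pds (L : List (Fin n)) (Q : MvPolynomial (Fin n) ℂ) :
    MvPolynomial (Fin n) ℂ :=
  L.foldr (fun i q => pderiv i q) Q

@[simp] lemma pds_nil (Q : MvPolynomial (Fin n) ℂ) : pds [] Q = Q := rfl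

@[simp] lemma pds_cons (i : Fin n) (L : List (Fin n)) (Q : MvPolynomial (Fin n) ℂ) :
    pds (i :: L) Q = pderiv i (pds L Q) := rfl

/-- The span of products of `k` iterated derivatives of `P` with total order `t`. -/
noncomputable def Slev (k : ℕ) (t : ℕ) (P : MvPolynomial (Fin n) ℂ) :
    Submodule ℂ (MvPolynomial (Fin n) ℂ) :=
  Submodule.span ℂ
    { q | ∃ L : Fin k → List (Fin n), (∑ j, (L j).length) = t ∧ q = ∏ j, pds (L j) P }

/-- Leibniz rule for `pderiv` of a finite product. -/
lemma pderiv_finset_prod {ι : Type*} [DecidableEq ι] (i : Fin n) (s : Finset ι)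
    (f : ι → MvPolynomial (Fin n) ℂ) :
    pderiv i (∏ j ∈ s, f j) =
      ∑ j ∈ s, pderiv i (f j) * ∏ j' ∈ s.erase j, f j' := by
  induction s using Finset.induction_on with
  | empty => simp
  | insert _ _ hj ih =>
    rename_i a s
    rw [Finset.prod_insert hj, pderiv_mul, ih, Finset.sum_insert hj,
      Finset.erase_insert hj]
    congr 1
    rw [Finset.mul_sum]
    refine Finset.sum_congr rfl fun b hb => ?_
    rw [Finset.erase_insert_of_ne (by rintro rfl; exact hj hb)]
    rw [Finset.prod_insert (fun h => hj (Finset.mem_of_mem_erase h))]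
    ring

lemma pderiv_mem_Slev (k t : ℕ) (P : MvPolynomial (Fin n) ℂ) (i : Fin n)
    {q : MvPolynomial (Fin n) ℂ} (hq : q ∈ Slev k t P) :
    pderiv i q ∈ Slev k (t + 1) P := by
  induction hq using Submodule.span_induction with
  | mem x hx =>
    obtain ⟨L, hL, rfl⟩ := hx
    rw [pderiv_finset_prod]
    refine Submodule.sum_mem _ fun j _ => ?_
    refine Submodule.subset_span ?_
    refine ⟨Function.update L j (i :: L j), ?_, ?_⟩
    · rw [← Finset.add_sum_erase _ _ (Finset.mem_univ j)]
      rw [← Finset.add_sum_erase _ _ (Finset.mem_univ j)] at hL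
      rw [Finset.sum_congr rfl
        (fun b hb => by rw [Function.update_of_ne (Finset.ne_of_mem_erase hb)])]
      simp only [Function.update_self, List.length_cons]
      omega
    · rw [← Finset.mul_prod_erase Finset.univ _ (Finset.mem_univ j),
        Function.update_self, pds_cons]
      congr 1
      refine Finset.prod_congr rfl fun b hb => ?_
      rw [Function.update_of_ne (Finset.ne_of_mem_erase hb)]
  | zero => simp
  | add x y _ _ hx hy => rw [map_add]; exact Submodule.add_mem _ hx hy
  | smul c x _ hx =>
    rw [(pderiv i).map_smul]
    exact Submodule.smul_mem _ _ hx

lemma lap_mem_Slev (k t : ℕ) (P : MvPolynomial (Fin n) ℂ)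
    {q : MvPolynomial (Fin n) ℂ} (hq : q ∈ Slev k t P) :
    lap q ∈ Slev k (t + 2) P := by
  unfold lap
  exact Submodule.sum_mem _ fun i _ =>
    pderiv_mem_Slev k (t + 1) P i (pderiv_mem_Slev k t P i hq)

lemma lap_iter_mem_Slev (k l : ℕ) (P : MvPolynomial (Fin n) ℂ) :
    lap^[l] (P ^ k) ∈ Slev k (2 * l) P := by
  induction l with
  | zero =>
    refine Submodule.subset_span ⟨fun _ => [], by simp, ?_⟩
    simp [pds_nil, Finset.prod_const]
  | succ l ih =>
    rw [Function.iterate_succ_apply']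
    have := lap_mem_Slev k (2 * l) P ih
    rw [show 2 * (l + 1) = 2 * l + 2 by ring]
    exact this

/-- Euler's identity. -/
lemma euler {d : ℕ} (P : MvPolynomial (Fin n) ℂ) (hhom : P.IsHomogeneous d) :
    ∑ i, X i * pderiv i P = (d : ℂ) • P := by
  conv_lhs => rw [← P.support_sum_monomial_coeff]
  conv_rhs => rw [← P.support_sum_monomial_coeff]
  rw [Finset.smul_sum]
  simp only [map_sum, Finset.mul_sum]
  rw [Finset.sum_comm]
  refine Finset.sum_congr rfl fun m hm => ?_
  have hdeg : (∑ i, m i) = d := by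
    have := hhom (MvPolynomial.mem_support_iff.mp hm)
    rw [← this]
    simp [Finsupp.weight_apply, Finsupp.sum_fintype]
  have key : ∀ i : Fin n, X i * pderiv i (monomial m (coeff m P)) =
      monomial m ((m i : ℂ) * coeff m P) := by
    intro i
    rw [pderiv_monomial]
    by_cases h : m i = 0
    · simp [h]
    · have hle : Finsupp.single i 1 ≤ m := by
        rw [Finsupp.single_le_iff]; omega
      rw [X, monomial_mul, add_tsub_cancel_of_le hle]
      congr 1
      ring
  simp only [key]
  rw [← map_sum (monomial m) (fun i => (m i : ℂ) * coeff m P) Finset.univ]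
  rw [← Finset.sum_mul, smul_monomial]
  congr 1
  rw [← Nat.cast_sum, hdeg]
  simp [smul_eq_mul]

end LapAux

theorem lap_pow_mem_jacobian_ideal {n d : ℕ} (hd : 1 ≤ d)
    (P : MvPolynomial (Fin n) ℂ) (hhom : P.IsHomogeneous d)
    (k l : ℕ) (hkl : l < k) :
    lap^[l] (P ^ k) ∈ Ideal.span (Set.range fun i : Fin n => pderiv i P) := by
  set J : Ideal (MvPolynomial (Fin n) ℂ) :=
    Ideal.span (Set.range fun i : Fin n => pderiv i P) with hJ
  have hPJ : P ∈ J := by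
    have heuler := LapAux.euler P hhom
    have hdne : (d : ℂ) ≠ 0 := by
      exact_mod_cast Nat.cast_ne_zero.mpr (by omega)
    have : P = (d : ℂ)⁻¹ • ∑ i, X i * pderiv i P := by
      rw [heuler, smul_smul, inv_mul_cancel₀ hdne, one_smul]
    rw [this, smul_eq_C_mul]
    exact Ideal.mul_mem_left _ _ (Submodule.sum_mem _ fun i _ =>
      Ideal.mul_mem_left _ _ (Ideal.subset_span ⟨i, rfl⟩))
  have hmem := LapAux.lap_iter_mem_Slev k l P
  have hsub : LapAux.Slev k (2 * l) P ≤ J.restrictScalars ℂ := by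
    rw [LapAux.Slev, Submodule.span_le]
    rintro q ⟨L, hL, rfl⟩
    -- some factor has order ≤ 1
    have hex : ∃ j : Fin k, (L j).length ≤ 1 := by
      by_contra hc
      push_neg at hc
      have h1 : ∑ _j : Fin k, (2:ℕ) ≤ ∑ j, (L j).length :=
        Finset.sum_le_sum fun j _ => hc j
      simp only [Finset.sum_const, Finset.card_univ, Fintype.card_fin,
        smul_eq_mul] at h1
      omega
    obtain ⟨j, hj⟩ := hex
    have hfac : LapAux.pds (L j) P ∈ J := by
      match hLj : L j with
      | [] => simpa using hPJ
      | [i] => exact Ideal.subset_span ⟨i, rfl⟩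
      | i :: i' :: rest => rw [hLj] at hj; simp at hj
    rw [← Finset.mul_prod_erase Finset.univ _ (Finset.mem_univ j)]
    exact Ideal.mul_mem_right _ _ hfac
  exact hsub hmem
end

section
/- Let P ∈ ℂ[z_1,...,z_n] be a polynomial with Δ^m P^m = 0 for all m ≥ 1 (e.g., P Hessian nilpotent). Define u_{k,α} = (α!/(2^k·k!·(k+α)!))·Δ^k P^{k+α} for integers k ≥ 0 and α ≥ 1, and suppose the generating identity Q_t^γ = Σ_{m≥0} u_{m,γ} t^m holds, where Q_t is the deformed inversion pair of P. Then for all α, β ≥ 1 and m ≥ 0: u_{m,α+β} = Σ_{k+l=m, k,l≥0} u_{k,α}·u_{l,β}; equivalently, Δ^m P^{m+α+β} = C(α+β,α)^{-1}·Σ_{k+l = m} C(m,k)·C(m+α+β, k+α)·(Δ^k P^{k+α})·(Δ^l P^{l+β}). -/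
open MvPolynomial

/-- `u_{k,α} = (α!/(2^k k! (k+α)!)) Δ^k P^{k+α}`. -/
noncomputable def uCoeff {n : ℕ} (P : MvPolynomial (Fin n) ℂ) (k α : ℕ) :
    MvPolynomial (Fin n) ℂ :=
  C ((Nat.factorial α : ℂ) / (2 ^ k * Nat.factorial k * Nat.factorial (k + α))) *
    lap^[k] (P ^ (k + α))

lemma uCoeff_key (α β m k : ℕ) (hk : k ≤ m) :
    (((α+β).factorial : ℂ) / (2^m * m.factorial * (m+α+β).factorial))⁻¹ *
      ((α.factorial : ℂ)/(2^k * k.factorial * (k+α).factorial)) *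
      ((β.factorial : ℂ)/(2^(m-k) * (m-k).factorial * (m-k+β).factorial))
    = (((α+β).choose α : ℂ))⁻¹ * (m.choose k) * ((m+α+β).choose (k+α)) := by
  have h2 : (2:ℂ)^m = 2^k * 2^(m-k) := by rw [← pow_add, Nat.add_sub_cancel' hk]
  rw [Nat.cast_choose ℂ (Nat.le_add_right α β),
      Nat.cast_choose ℂ hk,
      Nat.cast_choose ℂ (by omega : k + α ≤ m + α + β),
      Nat.add_sub_cancel_left, (by omega : m + α + β - (k + α) = m - k + β), h2]
  have f : ∀ j : ℕ, (j.factorial : ℂ) ≠ 0 := fun j => Nat.cast_ne_zero.mpr (Nat.factorial_ne_zero j)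
  have t : ∀ j : ℕ, ((2:ℂ))^j ≠ 0 := fun j => pow_ne_zero _ two_ne_zero
  have cancel : ∀ x a b : ℂ, a ≠ 0 → b ≠ 0 → x * a⁻¹ * b⁻¹ * a * b = x := by
    intro x a b ha hb; field_simp
  field_simp

theorem uCoeff_convolution {n : ℕ} (P : MvPolynomial (Fin n) ℂ)
    (hvan : ∀ m : ℕ, 1 ≤ m → lap^[m] (P ^ m) = 0)
    (Q : PowerSeries (MvPolynomial (Fin n) ℂ))
    (hQ : ∀ γ : ℕ, 1 ≤ γ → Q ^ γ = PowerSeries.mk fun m => uCoeff P m γ) :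
    ∀ (α β : ℕ), 1 ≤ α → 1 ≤ β → ∀ m : ℕ,
      (uCoeff P m (α + β) =
          ∑ k ∈ Finset.range (m + 1), uCoeff P k α * uCoeff P (m - k) β) ∧
        lap^[m] (P ^ (m + α + β)) =
          C (((Nat.choose (α + β) α : ℂ))⁻¹) *
            ∑ k ∈ Finset.range (m + 1),
              ((Nat.choose m k : MvPolynomial (Fin n) ℂ)) *
                ((Nat.choose (m + α + β) (k + α) : MvPolynomial (Fin n) ℂ)) *
                  (lap^[k] (P ^ (k + α)) * lap^[m - k] (P ^ (m - k + β))) := by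
  intro α β hα hβ m
  have f : ∀ j : ℕ, (j.factorial : ℂ) ≠ 0 := fun j => Nat.cast_ne_zero.mpr (Nat.factorial_ne_zero j)
  have t : ∀ j : ℕ, ((2:ℂ))^j ≠ 0 := fun j => pow_ne_zero _ two_ne_zero
  have hmul : (PowerSeries.mk fun j => uCoeff P j (α+β)) =
      (PowerSeries.mk fun j => uCoeff P j α) * (PowerSeries.mk fun j => uCoeff P j β) := by
    rw [← hQ α hα, ← hQ β hβ, ← hQ (α+β) (by omega), ← pow_add]
  have conv : uCoeff P m (α + β) =
      ∑ k ∈ Finset.range (m + 1), uCoeff P k α * uCoeff P (m - k) β := by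
    have := congrArg (PowerSeries.coeff m) hmul
    simpa [PowerSeries.coeff_mul, PowerSeries.coeff_mk,
      Finset.Nat.sum_antidiagonal_eq_sum_range_succ_mk] using this
  refine ⟨conv, ?_⟩
  have h := conv
  simp only [uCoeff] at h
  rw [(by omega : m + (α + β) = m + α + β)] at h
  set c : ℂ := ((α+β).factorial : ℂ) / (2^m * m.factorial * (m+α+β).factorial) with hc_def
  have hc : c ≠ 0 := div_ne_zero (f _) (by
    exact mul_ne_zero (mul_ne_zero (t m) (f m)) (f _))
  have hL : lap^[m] (P ^ (m + α + β)) =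
      C c⁻¹ * ∑ k ∈ Finset.range (m + 1),
        C ((α.factorial : ℂ)/(2^k * k.factorial * (k+α).factorial)) * lap^[k] (P^(k+α)) *
          (C ((β.factorial : ℂ)/(2^(m-k) * (m-k).factorial * (m-k+β).factorial)) *
            lap^[m-k] (P^(m-k+β))) := by
    rw [← h, ← mul_assoc, ← map_mul, inv_mul_cancel₀ hc, map_one, one_mul]
  rw [hL, Finset.mul_sum, Finset.mul_sum]
  refine Finset.sum_congr rfl fun k hk => ?_
  have hkm : k ≤ m := by have := Finset.mem_range.mp hk; omega
  have hsc := uCoeff_key α β m k hkm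
  calc C c⁻¹ * (C ((α.factorial : ℂ)/(2^k * k.factorial * (k+α).factorial)) * lap^[k] (P^(k+α)) *
          (C ((β.factorial : ℂ)/(2^(m-k) * (m-k).factorial * (m-k+β).factorial)) *
            lap^[m-k] (P^(m-k+β))))
      = C (c⁻¹ * ((α.factorial : ℂ)/(2^k * k.factorial * (k+α).factorial)) *
          ((β.factorial : ℂ)/(2^(m-k) * (m-k).factorial * (m-k+β).factorial))) *
          (lap^[k] (P^(k+α)) * lap^[m-k] (P^(m-k+β))) := by
        rw [map_mul, map_mul]; ring
    _ = _ := by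
        rw [hsc, map_mul, map_mul, map_natCast, map_natCast]; ring
end

section
/- Let P ∈ ℂ[z_1,...,z_n] be a Hessian nilpotent polynomial (so Δ^k(Δ^m P^{m+1}) = Δ^{m+k} P^{m+1} for iterated Laplacians). The following are equivalent: (1) for every k ≥ 1 there exists M such that Δ^m P^{m+k} = 0 for all m > M; (2) there exists k_0 ≥ 1 and M_0 such that Δ^m P^{m+k_0} = 0 for all m > M_0; (3) there exists M such that Δ^m P^{m+1} = 0 for all m > M. (For the implication (3) ⇒ (1), one may use that the generating series Q_t = Σ_{m≥1} (1/(2^{m-1} m! (m-1)!)) Δ^{m-1} P^m t^{m-1} satisfies Q_t^k = k! Σ_{m≥0} (t^m/(2^m m! (m+k)!)) Δ^m P^{m+k} for all k ≥ 1.) -/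
open MvPolynomial

namespace VanishAux

open Finset

variable {n : ℕ}

abbrev Rn (n : ℕ) := MvPolynomial (Fin n) ℂ

/-- Partial derivatives commute. -/
theorem pderiv_comm (i j : Fin n) (f : Rn n) :
    pderiv i (pderiv j f) = pderiv j (pderiv i f) := by
  induction f using MvPolynomial.induction_on with
  | C a => simp
  | add p q hp hq => simp [hp, hq]
  | mul_X p k hp =>
    have hX : ∀ (a : Fin n), pderiv a (X k : Rn n) = if a = k then 1 else 0 := by
      intro a
      rcases eq_or_ne a k with h | h
      · subst h; simp
      · simp [h]
    have hc : ∀ (a b : Fin n), pderiv b (if a = k then (1 : Rn n) else 0) = 0 := by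
      intro a b
      split <;> simp
    simp only [pderiv_mul, hX, map_add, hc, mul_zero, add_zero]
    rw [hp]
    ring

theorem lap_add (f g : Rn n) : lap (f + g) = lap f + lap g := by
  simp [lap, Finset.sum_add_distrib]

theorem lap_smul (c : ℂ) (f : Rn n) : lap (c • f) = c • lap f := by
  simp [lap, Finset.smul_sum]

theorem lap_zero : lap (0 : Rn n) = 0 := by simp [lap]

theorem lap_sum {α : Type*} (s : Finset α) (f : α → Rn n) :
    lap (∑ a ∈ s, f a) = ∑ a ∈ s, lap (f a) := by
  classical
  induction s using Finset.induction_on with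
  | empty => simp [lap_zero]
  | insert _ _ h ih => simp [Finset.sum_insert h, lap_add, ih]

/-- gradient pairing `∇f · ∇g`. -/
noncomputable def gp (f g : Rn n) : Rn n := ∑ i, pderiv i f * pderiv i g

theorem gp_def (f g : Rn n) : gp f g = ∑ i, pderiv i f * pderiv i g := rfl

theorem gp_comm (f g : Rn n) : gp f g = gp g f := by
  simp [gp, mul_comm]

/-- "Hessian pairing" `∑_{i,l} ∂i∂l f · ∂i∂l g`. -/
noncomputable def hp (f g : Rn n) : Rn n :=
  ∑ i, ∑ l, pderiv i (pderiv l f) * pderiv i (pderiv l g)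

theorem lap_mul (f g : Rn n) :
    lap (f * g) = f * lap g + g * lap f + 2 * gp f g := by
  have h : ∀ i : Fin n, pderiv i (pderiv i (f * g)) =
      f * pderiv i (pderiv i g) + g * pderiv i (pderiv i f)
        + 2 * (pderiv i f * pderiv i g) := by
    intro i
    rw [pderiv_mul, map_add, pderiv_mul, pderiv_mul]
    ring
  rw [lap]
  rw [Finset.sum_congr rfl fun i _ => h i]
  simp [lap, gp, Finset.sum_add_distrib, Finset.mul_sum]

theorem hp_def (f g : Rn n) :
    hp f g = ∑ i, ∑ l, pderiv i (pderiv l f) * pderiv i (pderiv l g) := rfl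

theorem lap_gp (f g : Rn n) :
    lap (gp f g) = gp (lap f) g + gp f (lap g) + 2 * hp f g := by
  have hlp : ∀ (l : Fin n) (u : Rn n), lap (pderiv l u) = pderiv l (lap u) := by
    intro l u
    rw [lap, lap, map_sum]
    exact Finset.sum_congr rfl fun i _ => by
      rw [pderiv_comm l i, pderiv_comm l i]
  rw [gp_def, lap_sum]
  have key : ∀ l : Fin n, lap (pderiv l f * pderiv l g)
      = pderiv l (lap f) * pderiv l g + pderiv l f * pderiv l (lap g)
        + 2 * ∑ i, pderiv i (pderiv l f) * pderiv i (pderiv l g) := by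
    intro l
    rw [lap_mul, gp_def, hlp, hlp]
    ring
  rw [Finset.sum_congr rfl fun l _ => key l]
  rw [Finset.sum_add_distrib, Finset.sum_add_distrib, gp_def, gp_def, hp_def,
    ← Finset.mul_sum, Finset.sum_comm]


/-- The coefficients of the generating series `Q`, defined by the
Hamilton-Jacobi recursion `(2(a+1)) q_{a+1} = ∑_{b+c=a} ∇q_b·∇q_c`, `q_0 = P`. -/
noncomputable def qs (P : Rn n) : ℕ → Rn n
  | 0 => P
  | (a+1) => ((2*(a+1) : ℂ))⁻¹ • ∑ b ∈ (Finset.range (a+1)).attach,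
      gp (qs P b.1) (qs P (a - b.1))
termination_by a => a
decreasing_by
  · exact Nat.lt_succ_of_le (Nat.le_of_lt_succ (Finset.mem_range.mp b.2))
  · exact Nat.lt_succ_of_le (Nat.sub_le a b.1)

theorem qs_zero (P : Rn n) : qs P 0 = P := by rw [qs]

theorem qs_succ (P : Rn n) (a : ℕ) :
    ((2*(a+1) : ℂ)) • qs P (a+1) = ∑ b ∈ Finset.range (a+1), gp (qs P b) (qs P (a - b)) := by
  rw [qs, smul_smul, mul_inv_cancel₀
    (mul_ne_zero two_ne_zero (Nat.cast_add_one_ne_zero a)), one_smul]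
  exact Finset.sum_attach (Finset.range (a+1)) (fun b => gp (qs P b) (qs P (a - b)))

section Series

open PowerSeries

/-- The generating series `Q_t`. -/
noncomputable def Qs (P : Rn n) : PowerSeries (Rn n) := PowerSeries.mk (qs P)

/-- Partial derivative, coefficientwise on power series. -/
noncomputable def pdS (l : Fin n) (f : PowerSeries (Rn n)) : PowerSeries (Rn n) :=
  PowerSeries.mk fun m => pderiv l (PowerSeries.coeff m f)

/-- Laplacian, coefficientwise on power series. -/
noncomputable def lapS (f : PowerSeries (Rn n)) : PowerSeries (Rn n) :=
  PowerSeries.mk fun m => lap (PowerSeries.coeff m f)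

/-- Gradient pairing on power series. -/
noncomputable def gpS (f g : PowerSeries (Rn n)) : PowerSeries (Rn n) :=
  ∑ l, pdS l f * pdS l g

@[simp] theorem coeff_Qs (P : Rn n) (m : ℕ) :
    PowerSeries.coeff m (Qs P) = qs P m := coeff_mk _ _

@[simp] theorem coeff_pdS (l : Fin n) (f : PowerSeries (Rn n)) (m : ℕ) :
    PowerSeries.coeff m (pdS l f) = pderiv l (PowerSeries.coeff m f) := coeff_mk _ _

@[simp] theorem coeff_lapS (f : PowerSeries (Rn n)) (m : ℕ) :
    PowerSeries.coeff m (lapS f) = lap (PowerSeries.coeff m f) := coeff_mk _ _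

theorem pdS_add (l : Fin n) (f g : PowerSeries (Rn n)) :
    pdS l (f + g) = pdS l f + pdS l g := by
  apply PowerSeries.ext; intro m; simp

theorem pdS_mul (l : Fin n) (f g : PowerSeries (Rn n)) :
    pdS l (f * g) = pdS l f * g + f * pdS l g := by
  apply PowerSeries.ext; intro m
  rw [coeff_pdS, PowerSeries.coeff_mul, map_sum, map_add, PowerSeries.coeff_mul,
    PowerSeries.coeff_mul, ← Finset.sum_add_distrib]
  refine Finset.sum_congr rfl fun p _ => ?_
  rw [pderiv_mul, coeff_pdS, coeff_pdS]

theorem coeff_gpS (f g : PowerSeries (Rn n)) (m : ℕ) :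
    PowerSeries.coeff m (gpS f g)
      = ∑ p ∈ Finset.HasAntidiagonal.antidiagonal m,
          gp (PowerSeries.coeff p.1 f) (PowerSeries.coeff p.2 g) := by
  rw [gpS, map_sum]
  have h : ∀ l : Fin n, PowerSeries.coeff m (pdS l f * pdS l g)
      = ∑ p ∈ Finset.HasAntidiagonal.antidiagonal m,
          pderiv l (PowerSeries.coeff p.1 f) * pderiv l (PowerSeries.coeff p.2 g) := by
    intro l; rw [PowerSeries.coeff_mul]; simp
  rw [Finset.sum_congr rfl fun l _ => h l, Finset.sum_comm]
  exact Finset.sum_congr rfl fun p _ => (gp_def _ _).symm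

theorem lapS_mul (f g : PowerSeries (Rn n)) :
    lapS (f * g) = f * lapS g + lapS f * g + 2 • gpS f g := by
  apply PowerSeries.ext; intro m
  rw [coeff_lapS, PowerSeries.coeff_mul, lap_sum, map_add, map_add, map_nsmul,
    PowerSeries.coeff_mul, PowerSeries.coeff_mul, coeff_gpS, Finset.smul_sum,
    ← Finset.sum_add_distrib, ← Finset.sum_add_distrib]
  refine Finset.sum_congr rfl fun p _ => ?_
  rw [lap_mul, coeff_lapS, coeff_lapS, nsmul_eq_mul]
  push_cast
  ring

theorem natCast_smul_eq (N : ℕ) (x : Rn n) : ((N : ℂ)) • x = x * (N : Rn n) := by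
  rw [MvPolynomial.smul_eq_C_mul, map_natCast (C : ℂ →+* Rn n) N, mul_comm]

theorem coeff_dF (f : PowerSeries (Rn n)) (m : ℕ) :
    PowerSeries.coeff m (derivativeFun f) = PowerSeries.coeff (m+1) f * (m+1) :=
  PowerSeries.coeff_derivative f m

theorem gpS_Q (P : Rn n) : gpS (Qs P) (Qs P) = 2 • derivativeFun (Qs P) := by
  apply PowerSeries.ext; intro m
  rw [coeff_gpS, map_nsmul, coeff_dF]
  rw [Finset.Nat.sum_antidiagonal_eq_sum_range_succ_mk]
  simp only [coeff_Qs]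
  have h1 : ((m:ℂ)+1) • qs P (m+1) = qs P (m+1) * ((m : Rn n)+1) := by
    have h := natCast_smul_eq (n := n) (m+1) (qs P (m+1))
    push_cast at h
    exact h
  have h2 : ((2:ℂ)) • (qs P (m+1) * ((m : Rn n)+1)) = 2 • (qs P (m+1) * ((m : Rn n)+1)) := by
    rw [← Nat.cast_smul_eq_nsmul ℂ 2]
    norm_num
  rw [← qs_succ P m, mul_smul, h1, h2]

theorem coeff_gpS' (f g : PowerSeries (Rn n)) (m : ℕ) :
    PowerSeries.coeff m (gpS f g)
      = ∑ b ∈ Finset.range (m+1),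
          gp (PowerSeries.coeff b f) (PowerSeries.coeff (m-b) g) := by
  rw [coeff_gpS, Finset.Nat.sum_antidiagonal_eq_sum_range_succ_mk]

section Deriv

variable (δ : PowerSeries (Rn n) → PowerSeries (Rn n))

/-- Entrywise application of an operator to a matrix. -/
noncomputable def mapMat (M : Matrix (Fin n) (Fin n) (PowerSeries (Rn n))) :
    Matrix (Fin n) (Fin n) (PowerSeries (Rn n)) :=
  Matrix.of fun i j => δ (M i j)

theorem mapMat_apply (M : Matrix (Fin n) (Fin n) (PowerSeries (Rn n))) (i j : Fin n) :
    mapMat δ M i j = δ (M i j) := rfl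

variable (hadd : ∀ f g, δ (f + g) = δ f + δ g)
variable (hmul : ∀ f g, δ (f * g) = δ f * g + f * δ g)

include hadd in
theorem delta_zero : δ 0 = 0 := by
  have h := hadd 0 0
  rw [add_zero] at h
  exact left_eq_add.mp h

include hadd in
theorem delta_sum {α : Type*} (s : Finset α) (F : α → PowerSeries (Rn n)) :
    δ (∑ x ∈ s, F x) = ∑ x ∈ s, δ (F x) := by
  classical
  induction s using Finset.induction_on with
  | empty => simpa using delta_zero δ hadd
  | insert _ _ h ih => rw [Finset.sum_insert h, Finset.sum_insert h, hadd, ih]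

include hadd hmul in
theorem mapMat_mul (A B : Matrix (Fin n) (Fin n) (PowerSeries (Rn n))) :
    mapMat δ (A * B) = mapMat δ A * B + A * mapMat δ B := by
  apply Matrix.ext; intro i j
  simp only [mapMat_apply, Matrix.add_apply, Matrix.mul_apply]
  rw [delta_sum δ hadd, ← Finset.sum_add_distrib]
  exact Finset.sum_congr rfl fun k _ => hmul _ _

include hadd hmul in
theorem mapMat_pow (A : Matrix (Fin n) (Fin n) (PowerSeries (Rn n))) (j : ℕ) :
    mapMat δ (A ^ (j+1)) = ∑ i ∈ Finset.range (j+1), A ^ i * mapMat δ A * A ^ (j-i) := by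
  induction j with
  | zero => simp
  | succ j ih =>
    have : A ^ (j+2) = A * A ^ (j+1) := by rw [← pow_succ']
    rw [this, mapMat_mul δ hadd hmul, ih, Finset.mul_sum]
    rw [Finset.sum_range_succ' (fun i => A ^ i * mapMat δ A * A ^ (j+1-i)) (j+1)]
    simp only [pow_zero, one_mul, mul_one, Nat.sub_zero]
    rw [add_comm]
    rw [add_left_inj]
    refine Finset.sum_congr rfl fun i hi => ?_
    have h1 : j + 1 - (i+1) = j - i := by omega
    simp only [h1, pow_succ', mul_assoc]
  
include hadd in
theorem trace_mapMat (M : Matrix (Fin n) (Fin n) (PowerSeries (Rn n))) :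
    (mapMat δ M).trace = δ M.trace := by
  rw [Matrix.trace, Matrix.trace, delta_sum δ hadd]
  rfl

include hadd hmul in
theorem delta_trace_pow (A : Matrix (Fin n) (Fin n) (PowerSeries (Rn n))) (j : ℕ) :
    δ ((A ^ (j+1)).trace) = (j+1) • (A ^ j * mapMat δ A).trace := by
  rw [← trace_mapMat δ hadd, mapMat_pow δ hadd hmul, Matrix.trace_sum]
  have key : ∀ i ∈ Finset.range (j+1),
      (A ^ i * mapMat δ A * A ^ (j-i)).trace = (A ^ j * mapMat δ A).trace := by
    intro i hi
    have hij : i ≤ j := Nat.lt_succ_iff.mp (Finset.mem_range.mp hi)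
    rw [Matrix.trace_mul_comm (A ^ i * mapMat δ A) (A ^ (j-i)), ← mul_assoc, ← pow_add,
      Nat.sub_add_cancel hij]
  rw [Finset.sum_congr rfl key, Finset.sum_const, Finset.card_range]

end Deriv


theorem coeff_mul_range (f g : PowerSeries (Rn n)) (m : ℕ) :
    PowerSeries.coeff m (f * g)
      = ∑ b ∈ Finset.range (m+1),
          PowerSeries.coeff b f * PowerSeries.coeff (m-b) g := by
  rw [PowerSeries.coeff_mul, Finset.Nat.sum_antidiagonal_eq_sum_range_succ_mk]

theorem dF_mul' (f g : PowerSeries (Rn n)) :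
    derivativeFun (f * g) = derivativeFun f * g + f * derivativeFun g := by
  rw [derivativeFun_mul, smul_eq_mul, smul_eq_mul]
  ring

theorem gpS_add_right (h f g : PowerSeries (Rn n)) :
    gpS h (f + g) = gpS h f + gpS h g := by
  rw [gpS, gpS, gpS, ← Finset.sum_add_distrib]
  exact Finset.sum_congr rfl fun l _ => by rw [pdS_add, mul_add]

theorem gpS_mul_right (h f g : PowerSeries (Rn n)) :
    gpS h (f * g) = gpS h f * g + f * gpS h g := by
  rw [gpS, gpS, gpS]
  have key : ∀ l : Fin n, pdS l h * pdS l (f * g)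
      = (pdS l h * pdS l f) * g + f * (pdS l h * pdS l g) := by
    intro l; rw [pdS_mul]; ring
  rw [Finset.sum_congr rfl fun l _ => key l, Finset.sum_add_distrib,
    ← Finset.sum_mul, ← Finset.mul_sum]

theorem pd3_comm (i j l : Fin n) (u : Rn n) :
    pderiv i (pderiv j (pderiv l u)) = pderiv l (pderiv i (pderiv j u)) := by
  rw [pderiv_comm j l u, pderiv_comm i l (pderiv j u)]

theorem pd_pd_gp (i j : Fin n) (f g : Rn n) :
    pderiv i (pderiv j (gp f g))
      = ((∑ l, pderiv i (pderiv l f) * pderiv j (pderiv l g))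
        + (∑ l, pderiv j (pderiv l f) * pderiv i (pderiv l g)))
        + ((∑ l, pderiv i (pderiv j (pderiv l f)) * pderiv l g)
        + (∑ l, pderiv l f * pderiv i (pderiv j (pderiv l g)))) := by
  rw [gp_def, map_sum, map_sum]
  have key : ∀ l : Fin n, pderiv i (pderiv j (pderiv l f * pderiv l g))
      = (pderiv i (pderiv l f) * pderiv j (pderiv l g)
          + pderiv j (pderiv l f) * pderiv i (pderiv l g))
        + (pderiv i (pderiv j (pderiv l f)) * pderiv l g
          + pderiv l f * pderiv i (pderiv j (pderiv l g))) := by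
    intro l
    rw [pderiv_mul, map_add, pderiv_mul, pderiv_mul]
    ring
  rw [Finset.sum_congr rfl fun l _ => key l, Finset.sum_add_distrib,
    Finset.sum_add_distrib, Finset.sum_add_distrib]


/-- The Hessian of the generating series, as a matrix of power series. -/
noncomputable def HQ (P : Rn n) : Matrix (Fin n) (Fin n) (PowerSeries (Rn n)) :=
  Matrix.of fun i j => PowerSeries.mk fun a => pderiv i (pderiv j (qs P a))

theorem coeff_HQ (P : Rn n) (i j : Fin n) (a : ℕ) :
    PowerSeries.coeff a (HQ P i j) = pderiv i (pderiv j (qs P a)) := by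
  have h : HQ P i j = PowerSeries.mk fun a => pderiv i (pderiv j (qs P a)) := rfl
  rw [h, coeff_mk]

theorem HQ_ode (P : Rn n) :
    mapMat derivativeFun (HQ P) = HQ P * HQ P + mapMat (gpS (Qs P)) (HQ P) := by
  apply Matrix.ext; intro i j
  apply PowerSeries.ext; intro a
  set S1 : Rn n := ∑ b ∈ Finset.range (a+1), ∑ l,
      pderiv i (pderiv l (qs P b)) * pderiv l (pderiv j (qs P (a-b))) with hS1
  set S4 : Rn n := ∑ b ∈ Finset.range (a+1), ∑ l,
      pderiv l (qs P b) * pderiv l (pderiv i (pderiv j (qs P (a-b)))) with hS4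
  -- right hand side
  have hR : PowerSeries.coeff a ((HQ P * HQ P + mapMat (gpS (Qs P)) (HQ P)) i j)
      = S1 + S4 := by
    rw [Matrix.add_apply, map_add]
    congr 1
    · rw [Matrix.mul_apply, map_sum, hS1]
      rw [Finset.sum_comm]
      refine Finset.sum_congr rfl fun l _ => ?_
      rw [coeff_mul_range]
      refine Finset.sum_congr rfl fun b _ => ?_
      rw [coeff_HQ, coeff_HQ]
    · rw [mapMat_apply, coeff_gpS', hS4]
      refine Finset.sum_congr rfl fun b _ => ?_
      rw [gp_def, coeff_Qs, coeff_HQ]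
  rw [hR, mapMat_apply, coeff_dF, coeff_HQ]
  -- the key computation coming from the defining recursion of `qs`
  have hkey : ((2*((a:ℂ)+1))) • pderiv i (pderiv j (qs P (a+1)))
      = ∑ b ∈ Finset.range (a+1),
          pderiv i (pderiv j (gp (qs P b) (qs P (a - b)))) := by
    have h := congrArg (fun x => pderiv i (pderiv j x)) (qs_succ P a)
    simp only [Derivation.map_smul, map_sum] at h
    exact h
  -- expand and symmetrize
  have hexp : ∑ b ∈ Finset.range (a+1),
      pderiv i (pderiv j (gp (qs P b) (qs P (a - b))))
      = ((∑ b ∈ Finset.range (a+1), ∑ l,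
            pderiv i (pderiv l (qs P b)) * pderiv j (pderiv l (qs P (a-b))))
        + (∑ b ∈ Finset.range (a+1), ∑ l,
            pderiv j (pderiv l (qs P b)) * pderiv i (pderiv l (qs P (a-b)))))
        + ((∑ b ∈ Finset.range (a+1), ∑ l,
            pderiv i (pderiv j (pderiv l (qs P b))) * pderiv l (qs P (a-b)))
        + (∑ b ∈ Finset.range (a+1), ∑ l,
            pderiv l (qs P b) * pderiv i (pderiv j (pderiv l (qs P (a-b)))))) := by
    rw [Finset.sum_congr rfl fun b _ => pd_pd_gp i j (qs P b) (qs P (a-b)),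
      Finset.sum_add_distrib, Finset.sum_add_distrib, Finset.sum_add_distrib]
  have hsym1 : ∑ b ∈ Finset.range (a+1), ∑ l,
      pderiv j (pderiv l (qs P b)) * pderiv i (pderiv l (qs P (a-b)))
      = ∑ b ∈ Finset.range (a+1), ∑ l,
          pderiv i (pderiv l (qs P b)) * pderiv j (pderiv l (qs P (a-b))) := by
    rw [← Finset.sum_range_reflect (fun b => ∑ l,
      pderiv j (pderiv l (qs P b)) * pderiv i (pderiv l (qs P (a-b)))) (a+1)]
    refine Finset.sum_congr rfl fun b hb => ?_
    have hb' : b ≤ a := Nat.lt_succ_iff.mp (Finset.mem_range.mp hb)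
    have h1 : a + 1 - 1 - b = a - b := by omega
    have h2 : a - (a - b) = b := by omega
    rw [h1, h2]
    exact Finset.sum_congr rfl fun l _ => mul_comm _ _
  have hsym2 : ∑ b ∈ Finset.range (a+1), ∑ l,
      pderiv i (pderiv j (pderiv l (qs P b))) * pderiv l (qs P (a-b))
      = ∑ b ∈ Finset.range (a+1), ∑ l,
          pderiv l (qs P b) * pderiv i (pderiv j (pderiv l (qs P (a-b)))) := by
    rw [← Finset.sum_range_reflect (fun b => ∑ l,
      pderiv i (pderiv j (pderiv l (qs P b))) * pderiv l (qs P (a-b))) (a+1)]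
    refine Finset.sum_congr rfl fun b hb => ?_
    have hb' : b ≤ a := Nat.lt_succ_iff.mp (Finset.mem_range.mp hb)
    have h1 : a + 1 - 1 - b = a - b := by omega
    have h2 : a - (a - b) = b := by omega
    rw [h1, h2]
    exact Finset.sum_congr rfl fun l _ => mul_comm _ _
  -- identify the symmetric pieces with S1 and S4 using commutation of derivatives
  have hid1 : ∑ b ∈ Finset.range (a+1), ∑ l,
      pderiv i (pderiv l (qs P b)) * pderiv j (pderiv l (qs P (a-b))) = S1 := by
    rw [hS1]
    exact Finset.sum_congr rfl fun b _ => Finset.sum_congr rfl fun l _ => by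
      rw [pderiv_comm j l]
  have hid4 : ∑ b ∈ Finset.range (a+1), ∑ l,
      pderiv l (qs P b) * pderiv i (pderiv j (pderiv l (qs P (a-b)))) = S4 := by
    rw [hS4]
    exact Finset.sum_congr rfl fun b _ => Finset.sum_congr rfl fun l _ => by
      rw [pd3_comm i j l]
  have hfinal : ((a:ℂ)+1) • pderiv i (pderiv j (qs P (a+1))) = S1 + S4 := by
    apply smul_right_injective (Rn n) (two_ne_zero (α := ℂ))
    show (2:ℂ) • (((a:ℂ)+1) • pderiv i (pderiv j (qs P (a+1)))) = (2:ℂ) • (S1 + S4)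
    rw [← mul_smul, hkey, hexp, hsym1, hsym2, hid1, hid4]
    rw [two_smul]
    abel
  rw [← hfinal]
  have h := natCast_smul_eq (n := n) (a+1) (pderiv i (pderiv j (qs P (a+1))))
  push_cast at h ⊢
  exact h.symm


theorem gp_zero_left (g : Rn n) : gp 0 g = 0 := by
  rw [gp_def]
  simp

theorem gp_zero_right (f : Rn n) : gp f 0 = 0 := by
  rw [gp_def]
  simp

theorem natCast_succ_ne_zero (m : ℕ) : ((m+1 : ℕ) : Rn n) ≠ 0 := by
  intro h
  have h2 := congrArg MvPolynomial.constantCoeff h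
  rw [map_natCast, map_zero] at h2
  have h3 : (m+1 : ℕ) = 0 := by exact_mod_cast h2
  omega

/-- The scalar ODE for traces of powers of `HQ`. -/
theorem trace_ode (P : Rn n) (j : ℕ) :
    derivativeFun (((HQ P)^(j+1)).trace)
      = (j+1) • ((HQ P)^(j+2)).trace + gpS (Qs P) (((HQ P)^(j+1)).trace) := by
  rw [delta_trace_pow derivativeFun derivativeFun_add dF_mul' (HQ P) j,
    delta_trace_pow (gpS (Qs P)) (gpS_add_right (Qs P)) (gpS_mul_right (Qs P)) (HQ P) j]
  rw [HQ_ode, mul_add, Matrix.trace_add, smul_add]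
  rw [add_left_inj]
  rw [← mul_assoc, ← pow_succ, ← pow_succ]

theorem constCoeff_trace_pow (P : Rn n) (k : ℕ) :
    PowerSeries.constantCoeff (((HQ P)^k).trace) = ((hess P)^k).trace := by
  set φ := (PowerSeries.constantCoeff (R := Rn n))
  have hmap : (HQ P).map φ = hess P := by
    apply Matrix.ext; intro i j
    have h : HQ P i j = PowerSeries.mk fun a => pderiv i (pderiv j (qs P a)) := rfl
    simp only [Matrix.map_apply, h]
    have h0 : φ (PowerSeries.mk fun a => pderiv i (pderiv j (qs P a)))
        = pderiv i (pderiv j (qs P 0)) := by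
      rw [← PowerSeries.coeff_zero_eq_constantCoeff_apply, coeff_mk]
    rw [h0, qs_zero]
    rfl
  have htr : ∀ (A : Matrix (Fin n) (Fin n) (PowerSeries (Rn n))),
      φ A.trace = (A.map φ).trace := by
    intro A
    rw [Matrix.trace, Matrix.trace, map_sum]
    rfl
  rw [htr, ← hmap]
  congr 1
  rw [← RingHom.mapMatrix_apply, ← RingHom.mapMatrix_apply, map_pow]

theorem trace_hess_pow_zero (P : Rn n) (hHN : IsNilpotent (hess P)) (k : ℕ) :
    ((hess P)^(k+1)).trace = 0 := by
  obtain ⟨N, hN⟩ := hHN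
  have hnil : IsNilpotent ((hess P)^(k+1)) := by
    refine ⟨N, ?_⟩
    rw [← pow_mul, mul_comm, pow_mul, hN]
    exact zero_pow (Nat.succ_ne_zero k)
  exact (Matrix.isNilpotent_trace_of_isNilpotent hnil).eq_zero

theorem trace_pow_vanish (P : Rn n) (hHN : IsNilpotent (hess P)) (j : ℕ) :
    ((HQ P)^(j+1)).trace = 0 := by
  suffices h : ∀ (a : ℕ) (j : ℕ), PowerSeries.coeff a (((HQ P)^(j+1)).trace) = 0 by
    apply PowerSeries.ext; intro a
    rw [h a j, map_zero]
  intro a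
  induction a using Nat.strong_induction_on with
  | _ a ih =>
    intro j
    match a with
    | 0 =>
      rw [PowerSeries.coeff_zero_eq_constantCoeff_apply, constCoeff_trace_pow]
      exact trace_hess_pow_zero P hHN j
    | (a+1) =>
      have hode := congrArg (PowerSeries.coeff a) (trace_ode P j)
      rw [coeff_dF, map_add, map_nsmul, ih a (Nat.lt_succ_self a) (j+1),
        smul_zero, zero_add, coeff_gpS'] at hode
      have hz : ∑ b ∈ Finset.range (a+1),
          gp (PowerSeries.coeff b (Qs P))
            (PowerSeries.coeff (a-b) (((HQ P)^(j+1)).trace)) = 0 := by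
        refine Finset.sum_eq_zero fun b hb => ?_
        rw [ih (a-b) (Nat.lt_succ_of_le (Nat.sub_le a b)) j, gp_zero_right]
      rw [hz] at hode
      rcases mul_eq_zero.mp hode with h | h
      · exact h
      · exfalso
        have h4 : ((a+1 : ℕ) : Rn n) = 0 := by push_cast; exact h
        exact natCast_succ_ne_zero a h4


theorem coeff_trace_HQ_sq (P : Rn n) (a : ℕ) :
    PowerSeries.coeff a (((HQ P)^2).trace)
      = ∑ b ∈ Finset.range (a+1), hp (qs P b) (qs P (a-b)) := by
  rw [pow_two, Matrix.trace, map_sum]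
  have h1 : ∀ i : Fin n, PowerSeries.coeff a (Matrix.diag (HQ P * HQ P) i)
      = ∑ l, ∑ b ∈ Finset.range (a+1),
          pderiv i (pderiv l (qs P b)) * pderiv i (pderiv l (qs P (a-b))) := by
    intro i
    rw [Matrix.diag_apply, Matrix.mul_apply, map_sum]
    refine Finset.sum_congr rfl fun l _ => ?_
    rw [coeff_mul_range]
    refine Finset.sum_congr rfl fun b _ => ?_
    rw [coeff_HQ, coeff_HQ, pderiv_comm l i]
  rw [Finset.sum_congr rfl fun i _ => h1 i]
  rw [Finset.sum_congr rfl fun i (_ : i ∈ Finset.univ) => Finset.sum_comm, Finset.sum_comm]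
  exact Finset.sum_congr rfl fun b _ => (hp_def _ _).symm

theorem lap_qs (P : Rn n) (hHN : IsNilpotent (hess P)) (a : ℕ) : lap (qs P a) = 0 := by
  induction a using Nat.strong_induction_on with
  | _ a ih =>
    match a with
    | 0 =>
      rw [qs_zero]
      have h : lap P = (hess P).trace := by
        rw [lap, Matrix.trace]
        exact Finset.sum_congr rfl fun i _ => rfl
      rw [h]
      have h2 := trace_hess_pow_zero P hHN 0
      rwa [pow_one] at h2
    | (a+1) =>
      have h := congrArg lap (qs_succ P a)
      rw [lap_smul, lap_sum] at h
      have h2 : ∀ b ∈ Finset.range (a+1),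
          lap (gp (qs P b) (qs P (a-b))) = 2 * hp (qs P b) (qs P (a-b)) := by
        intro b hb
        rw [lap_gp, ih b (Finset.mem_range.mp hb),
          ih (a-b) (Nat.lt_succ_of_le (Nat.sub_le a b)), gp_zero_left, gp_zero_right,
          zero_add, zero_add]
      rw [Finset.sum_congr rfl h2, ← Finset.mul_sum, ← coeff_trace_HQ_sq] at h
      have h3 := trace_pow_vanish P hHN 1
      rw [h3, map_zero, mul_zero] at h
      rcases smul_eq_zero.mp h with h4 | h4
      · exfalso
        have : ((2:ℂ)) * ((a:ℂ)+1) ≠ 0 :=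
          mul_ne_zero two_ne_zero (Nat.cast_add_one_ne_zero a)
        exact this h4
      · exact h4

theorem lapS_Qs (P : Rn n) (hHN : IsNilpotent (hess P)) : lapS (Qs P) = 0 := by
  apply PowerSeries.ext; intro m
  rw [coeff_lapS, coeff_Qs, lap_qs P hHN, map_zero]


theorem dF_pow (Q : PowerSeries (Rn n)) (k : ℕ) :
    derivativeFun (Q^(k+1)) = (k+1) • (Q^k * derivativeFun Q) := by
  induction k with
  | zero => rw [pow_one, pow_zero, one_mul, zero_add, one_smul]
  | succ k ih =>
    rw [pow_succ, dF_mul', ih, smul_mul_assoc]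
    have h1 : Q^k * derivativeFun Q * Q = Q^(k+1) * derivativeFun Q := by ring
    rw [h1, succ_nsmul ((Q^(k+1)) * derivativeFun Q) (k+1)]

theorem Q_mul_dF_pow (Q : PowerSeries (Rn n)) (k : ℕ) :
    Q * derivativeFun (Q^k) = k • (Q^k * derivativeFun Q) := by
  cases k with
  | zero => rw [pow_zero, derivativeFun_one, mul_zero, zero_smul]
  | succ k =>
    rw [dF_pow, mul_smul_comm]
    have h1 : Q * (Q^k * derivativeFun Q) = Q^(k+1) * derivativeFun Q := by ring
    rw [h1]

theorem gpS_pow_right (h Q : PowerSeries (Rn n)) (k : ℕ) :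
    gpS h (Q^(k+1)) = (k+1) • (Q^k * gpS h Q) := by
  induction k with
  | zero => rw [pow_one, pow_zero, one_mul, zero_add, one_smul]
  | succ k ih =>
    rw [pow_succ, gpS_mul_right, ih, smul_mul_assoc]
    have h1 : Q^k * gpS h Q * Q = Q^(k+1) * gpS h Q := by ring
    have h2 : Q^(k+1) * gpS h Q = Q^(k+1) * gpS h Q := rfl
    rw [h1, succ_nsmul (Q^(k+1) * gpS h Q) (k+1)]

/-- The key identity: `Δ(Q^{k+1}) = 2(k+1) ∂_t(Q^k)`. -/
theorem lapS_pow (P : Rn n) (hHN : IsNilpotent (hess P)) (k : ℕ) :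
    lapS ((Qs P)^(k+1)) = (2*(k+1)) • derivativeFun ((Qs P)^k) := by
  induction k with
  | zero =>
    rw [pow_one, lapS_Qs P hHN, pow_zero, derivativeFun_one, smul_zero]
  | succ k ih =>
    have hQ : (Qs P)^(k+2) = Qs P * (Qs P)^(k+1) := by ring
    rw [hQ, lapS_mul, ih, lapS_Qs P hHN, zero_mul, add_zero]
    rw [gpS_pow_right (Qs P) (Qs P) k, gpS_Q]
    -- reduce everything to multiples of Y := Q^{k+1} * dF Q
    rw [mul_smul_comm, Q_mul_dF_pow]
    rw [dF_pow]
    rw [smul_smul, smul_smul, smul_smul, mul_smul_comm, smul_smul, ← add_smul]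
    congr 1
    ring
  

/-- Normalizing constants. -/
noncomputable def gam (m k : ℕ) : ℂ :=
  (2^m * m.factorial * (m+k).factorial) / k.factorial

theorem gam_ne_zero (m k : ℕ) : gam m k ≠ 0 := by
  apply div_ne_zero
  · exact mul_ne_zero (mul_ne_zero (pow_ne_zero _ two_ne_zero)
      (Nat.cast_ne_zero.mpr (Nat.factorial_ne_zero m)))
      (Nat.cast_ne_zero.mpr (Nat.factorial_ne_zero (m+k)))
  · exact Nat.cast_ne_zero.mpr (Nat.factorial_ne_zero k)

theorem gam_step (m k : ℕ) :
    gam m (k+1) * (2*((k:ℂ)+1)) * ((m:ℂ)+1) = gam (m+1) k := by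
  rw [gam, gam]
  have h1 : ((k+1).factorial : ℂ) = ((k:ℂ)+1) * k.factorial := by
    rw [Nat.factorial_succ]; push_cast; ring
  have h2 : ((m+1).factorial : ℂ) = ((m:ℂ)+1) * m.factorial := by
    rw [Nat.factorial_succ]; push_cast; ring
  have h3 : m + (k+1) = (m+1) + k := by omega
  rw [h1, h2, h3]
  have hk : (Nat.factorial k : ℂ) ≠ 0 := Nat.cast_ne_zero.mpr (Nat.factorial_ne_zero k)
  have hk1 : ((k:ℂ)+1) ≠ 0 := Nat.cast_add_one_ne_zero k
  field_simp
  ring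

/-- The master identity. -/
theorem master (P : Rn n) (hHN : IsNilpotent (hess P)) :
    ∀ (m k : ℕ), lap^[m] (P^(m+k)) = gam m k • PowerSeries.coeff m ((Qs P)^k) := by
  intro m
  induction m with
  | zero =>
    intro k
    rw [Function.iterate_zero_apply, zero_add]
    have hc : PowerSeries.coeff 0 ((Qs P)^k) = P^k := by
      rw [PowerSeries.coeff_zero_eq_constantCoeff_apply, map_pow]
      congr 1
      rw [← PowerSeries.coeff_zero_eq_constantCoeff_apply, coeff_Qs, qs_zero]
    have hg : gam 0 k = 1 := by
      rw [gam]
      simp only [pow_zero, Nat.factorial_zero, Nat.cast_one, one_mul, zero_add]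
      exact div_self (Nat.cast_ne_zero.mpr (Nat.factorial_ne_zero k))
    rw [hc, hg, one_smul]
  | succ m ih =>
    intro k
    have harg : m + 1 + k = m + (k+1) := by omega
    rw [harg, Function.iterate_succ_apply', ih (k+1), lap_smul]
    have hc : lap (PowerSeries.coeff m ((Qs P)^(k+1)))
        = PowerSeries.coeff m (lapS ((Qs P)^(k+1))) := (coeff_lapS _ _).symm
    rw [hc, lapS_pow P hHN k, map_nsmul, coeff_dF]
    set X := PowerSeries.coeff (m+1) ((Qs P)^k) with hX
    have h1 : X * ((m : Rn n)+1) = ((m:ℂ)+1) • X := by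
      have h := natCast_smul_eq (n := n) (m+1) X
      push_cast at h
      exact h.symm
    have h2 : (2*(k+1) : ℕ) • (((m:ℂ)+1) • X) = ((2*((k:ℂ)+1)) * ((m:ℂ)+1)) • X := by
      rw [← Nat.cast_smul_eq_nsmul ℂ (2*(k+1)), smul_smul]
      push_cast
      ring_nf
    have hcast : PowerSeries.coeff (m+1) ((Qs P)^k) * ((m:Rn n)+1) = X * ((m : Rn n)+1) := rfl
    rw [hcast, h1, h2, smul_smul, ← mul_assoc, gam_step]


theorem coeff_pow_vanish (P : Rn n) (M : ℕ) (hq : ∀ m, M < m → qs P m = 0) :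
    ∀ (k m : ℕ), k * M < m → PowerSeries.coeff m ((Qs P)^k) = 0 := by
  intro k
  induction k with
  | zero =>
    intro m hm
    rw [pow_zero, PowerSeries.coeff_one]
    simp only [Nat.zero_mul] at hm
    rw [if_neg (by omega)]
  | succ k ih =>
    intro m hm
    rw [pow_succ', coeff_mul_range]
    refine Finset.sum_eq_zero fun b hb => ?_
    rcases le_or_gt b M with hbM | hbM
    · have hb' : b < m + 1 := Finset.mem_range.mp hb
      have h1 : k * M < m - b := by
        have : (k+1) * M = k * M + M := by ring
        omega
      rw [ih (m-b) h1, mul_zero]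
    · rw [coeff_Qs, hq b hbM, zero_mul]

/-- Ascent: from the vanishing for `k = 1` to the vanishing for all `k ≥ 1`. -/
theorem ascent (P : Rn n) (hHN : IsNilpotent (hess P)) (M : ℕ)
    (h : ∀ m, M < m → lap^[m] (P^(m+1)) = 0) (k : ℕ) :
    ∀ m, k * M < m → lap^[m] (P^(m+k)) = 0 := by
  have hq : ∀ m, M < m → qs P m = 0 := by
    intro m hm
    have h1 := master P hHN m 1
    rw [h m hm] at h1
    have h2 := (smul_eq_zero.mp h1.symm).resolve_left (gam_ne_zero m 1)
    rw [pow_one, coeff_Qs] at h2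
    exact h2
  intro m hm
  rw [master P hHN m k, coeff_pow_vanish P M hq k m hm, smul_zero]

/-- Descent: from the vanishing for `k₀` to the vanishing for `k₀ - j`. -/
theorem descent (P : Rn n) (k₀ M₀ : ℕ)
    (h : ∀ m, M₀ < m → lap^[m] (P^(m+k₀)) = 0) :
    ∀ (j : ℕ), j < k₀ → ∀ m, M₀ + j < m → lap^[m] (P^(m+(k₀-j))) = 0 := by
  intro j
  induction j with
  | zero =>
    intro _ m hm
    simpa using h m (by omega)
  | succ j ih =>
    intro hj m hm
    obtain ⟨m', rfl⟩ : ∃ m', m = m' + 1 := ⟨m - 1, by omega⟩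
    have he : m' + 1 + (k₀ - (j+1)) = m' + (k₀ - j) := by omega
    rw [he, Function.iterate_succ_apply', ih (by omega) m' (by omega), lap_zero]

end Series

end VanishAux

theorem vanishing_equivalences {n : ℕ} (P : MvPolynomial (Fin n) ℂ)
    (hHN : IsNilpotent (hess P)) :
    ((∀ k : ℕ, 1 ≤ k → ∃ M : ℕ, ∀ m : ℕ, M < m → lap^[m] (P ^ (m + k)) = 0) ↔
        (∃ k₀ : ℕ, 1 ≤ k₀ ∧ ∃ M₀ : ℕ, ∀ m : ℕ, M₀ < m → lap^[m] (P ^ (m + k₀)) = 0)) ∧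
      ((∃ k₀ : ℕ, 1 ≤ k₀ ∧ ∃ M₀ : ℕ, ∀ m : ℕ, M₀ < m → lap^[m] (P ^ (m + k₀)) = 0) ↔
        (∃ M : ℕ, ∀ m : ℕ, M < m → lap^[m] (P ^ (m + 1)) = 0)) := by
  -- (2) implies (3), by descent (no Hessian nilpotency needed)
  have h23 : (∃ k₀ : ℕ, 1 ≤ k₀ ∧ ∃ M₀ : ℕ, ∀ m : ℕ, M₀ < m → lap^[m] (P ^ (m + k₀)) = 0) →
      (∃ M : ℕ, ∀ m : ℕ, M < m → lap^[m] (P ^ (m + 1)) = 0) := by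
    rintro ⟨k₀, hk₀, M₀, h⟩
    refine ⟨M₀ + (k₀ - 1), fun m hm => ?_⟩
    have hd := VanishAux.descent P k₀ M₀ h (k₀ - 1) (by omega) m hm
    have he : k₀ - (k₀ - 1) = 1 := by omega
    rwa [he] at hd
  -- (3) implies (1), by ascent (uses Hessian nilpotency)
  have h31 : (∃ M : ℕ, ∀ m : ℕ, M < m → lap^[m] (P ^ (m + 1)) = 0) →
      (∀ k : ℕ, 1 ≤ k → ∃ M : ℕ, ∀ m : ℕ, M < m → lap^[m] (P ^ (m + k)) = 0) := by
    rintro ⟨M, h⟩ k _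
    exact ⟨k * M, fun m hm => VanishAux.ascent P hHN M h k m hm⟩
  constructor
  · constructor
    · intro h1
      exact ⟨1, le_refl 1, h1 1 (le_refl 1)⟩
    · intro h2
      exact h31 (h23 h2)
  · constructor
    · exact h23
    · intro h3
      exact ⟨1, le_refl 1, h3⟩
end
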